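/- Let h : ℝⁿ × ℝᵐ × ℝᵖ → ℝⁿ be C¹ and suppose (x(δ), u(δ), d(δ)) are differentiable curves with ∇_x h invertible along the trajectory, where x satisfies the sensitivity-conditioned flow dx/dδ = -(∇_x h)⁻¹ (h + ∇_u h · du/dδ + ∇_d h · dd/dδ). Then d/dδ ‖h(x(δ),u(δ),d(δ))‖² = -2‖h(x(δ),u(δ),d(δ))‖², so ‖h(x(δ),u(δ),d(δ))‖ = ‖h(x(0),u(0),d(0))‖ e^{-δ}. -/

import Mathlib

open Set

/-- along the sensitivity-conditioned Newton flow
dx/dδ = -(∇ₓh)⁻¹ (h + ∇ᵤh u̇ + ∇_d h ḋ), the residual satisfies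
d/dδ ‖h‖² = -2‖h‖² and hence decays exponentially. -/
theorem sensitivity_conditioned_flow_residual_decay
    {n m p : ℕ}
    (h : EuclideanSpace ℝ (Fin n) × EuclideanSpace ℝ (Fin m) ×
          EuclideanSpace ℝ (Fin p) → EuclideanSpace ℝ (Fin n))
    (hh : ContDiff ℝ 1 h)
    (T : ℝ) (hT : 0 ≤ T)
    (x x' : ℝ → EuclideanSpace ℝ (Fin n))
    (u u' : ℝ → EuclideanSpace ℝ (Fin m))
    (d d' : ℝ → EuclideanSpace ℝ (Fin p))
    (hx : ∀ δ ∈ Icc 0 T, HasDerivAt x (x' δ) δ)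
    (hu : ∀ δ ∈ Icc 0 T, HasDerivAt u (u' δ) δ)
    (hd : ∀ δ ∈ Icc 0 T, HasDerivAt d (d' δ) δ)
    (hinv : ∀ δ ∈ Icc 0 T,
      IsUnit (fderiv ℝ (fun ξ => h (ξ, u δ, d δ)) (x δ)))
    (hode : ∀ δ ∈ Icc 0 T,
      fderiv ℝ (fun ξ => h (ξ, u δ, d δ)) (x δ) (x' δ) =
        - (h (x δ, u δ, d δ)
          + fderiv ℝ (fun υ => h (x δ, υ, d δ)) (u δ) (u' δ)
          + fderiv ℝ (fun w => h (x δ, u δ, w)) (d δ) (d' δ))) :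
    (∀ δ ∈ Icc 0 T,
      HasDerivAt (fun s => ‖h (x s, u s, d s)‖ ^ 2)
        (-2 * ‖h (x δ, u δ, d δ)‖ ^ 2) δ) ∧
    (∀ δ ∈ Icc 0 T,
      ‖h (x δ, u δ, d δ)‖ = ‖h (x 0, u 0, d 0)‖ * Real.exp (-δ)) := by
  -- notation
  set g : ℝ → EuclideanSpace ℝ (Fin n) := fun s => h (x s, u s, d s) with hg_def
  -- the residual satisfies g' = -g along the flow
  have key : ∀ δ ∈ Icc (0:ℝ) T, HasDerivAt g (-(g δ)) δ := by
    intro δ hδ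
    have hD : HasFDerivAt h (fderiv ℝ h (x δ, u δ, d δ)) (x δ, u δ, d δ) :=
      (hh.differentiable one_ne_zero _).hasFDerivAt
    have hc : HasDerivAt (fun s => (x s, u s, d s)) (x' δ, u' δ, d' δ) δ :=
      HasDerivAt.prodMk (hx δ hδ) (HasDerivAt.prodMk (hu δ hδ) (hd δ hδ))
    have hg' : HasDerivAt g (fderiv ℝ h (x δ, u δ, d δ) (x' δ, u' δ, d' δ)) δ :=
      hD.comp_hasDerivAt δ hc
    -- partial derivatives
    have px : fderiv ℝ (fun ξ => h (ξ, u δ, d δ)) (x δ) (x' δ)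
        = fderiv ℝ h (x δ, u δ, d δ) (x' δ, 0, 0) := by
      have hcurve : HasFDerivAt (fun ξ : EuclideanSpace ℝ (Fin n) => (ξ, u δ, d δ))
          ((ContinuousLinearMap.id ℝ _).prod 0) (x δ) :=
        HasFDerivAt.prodMk (hasFDerivAt_id _) (hasFDerivAt_const (u δ, d δ) _)
      rw [show (fun ξ => h (ξ, u δ, d δ))
            = (h ∘ fun ξ : EuclideanSpace ℝ (Fin n) => (ξ, u δ, d δ)) from rfl,
          (hD.comp (x δ) hcurve).fderiv]
      rfl
    have pu : fderiv ℝ (fun υ => h (x δ, υ, d δ)) (u δ) (u' δ)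
        = fderiv ℝ h (x δ, u δ, d δ) (0, u' δ, 0) := by
      have hcurve : HasFDerivAt (fun υ : EuclideanSpace ℝ (Fin m) => (x δ, υ, d δ))
          ((0 : EuclideanSpace ℝ (Fin m) →L[ℝ] EuclideanSpace ℝ (Fin n)).prod
            ((ContinuousLinearMap.id ℝ _).prod 0)) (u δ) :=
        HasFDerivAt.prodMk (hasFDerivAt_const (x δ) _)
          (HasFDerivAt.prodMk (hasFDerivAt_id _) (hasFDerivAt_const (d δ) _))
      rw [show (fun υ => h (x δ, υ, d δ))
            = (h ∘ fun υ : EuclideanSpace ℝ (Fin m) => (x δ, υ, d δ)) from rfl,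
          (hD.comp (u δ) hcurve).fderiv]
      rfl
    have pd : fderiv ℝ (fun w => h (x δ, u δ, w)) (d δ) (d' δ)
        = fderiv ℝ h (x δ, u δ, d δ) (0, 0, d' δ) := by
      have hcurve : HasFDerivAt (fun w : EuclideanSpace ℝ (Fin p) => (x δ, u δ, w))
          ((0 : EuclideanSpace ℝ (Fin p) →L[ℝ] EuclideanSpace ℝ (Fin n)).prod
            ((0 : EuclideanSpace ℝ (Fin p) →L[ℝ] EuclideanSpace ℝ (Fin m)).prod
              (ContinuousLinearMap.id ℝ _))) (d δ) :=
        HasFDerivAt.prodMk (hasFDerivAt_const (x δ) _)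
          (HasFDerivAt.prodMk (hasFDerivAt_const (u δ) _) (hasFDerivAt_id _))
      rw [show (fun w => h (x δ, u δ, w))
            = (h ∘ fun w : EuclideanSpace ℝ (Fin p) => (x δ, u δ, w)) from rfl,
          (hD.comp (d δ) hcurve).fderiv]
      rfl
    have hsplit : fderiv ℝ h (x δ, u δ, d δ) (x' δ, u' δ, d' δ)
        = fderiv ℝ h (x δ, u δ, d δ) (x' δ, 0, 0)
          + fderiv ℝ h (x δ, u δ, d δ) (0, u' δ, 0)
          + fderiv ℝ h (x δ, u δ, d δ) (0, 0, d' δ) := by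
      rw [← map_add, ← map_add]
      congr 1
      simp [Prod.ext_iff]
    have hval : fderiv ℝ h (x δ, u δ, d δ) (x' δ, u' δ, d' δ) = -(g δ) := by
      have := hode δ hδ
      rw [px, pu, pd] at this
      rw [hsplit, this]
      simp only [hg_def]
      abel
    rwa [hval] at hg'
  -- first conclusion
  have part1 : ∀ δ ∈ Icc (0:ℝ) T,
      HasDerivAt (fun s => ‖g s‖ ^ 2) (-2 * ‖g δ‖ ^ 2) δ := by
    intro δ hδ
    have hgd := key δ hδ
    have hin := hgd.inner ℝ hgd
    simp only [real_inner_self_eq_norm_sq] at hin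
    have hv : (inner ℝ (g δ) (-(g δ)) + inner ℝ (-(g δ)) (g δ) : ℝ)
        = -2 * ‖g δ‖ ^ 2 := by
      simp only [inner_neg_right, inner_neg_left, real_inner_self_eq_norm_sq]
      ring
    rwa [hv] at hin
  refine ⟨part1, ?_⟩
  -- exponential decay
  set φ : ℝ → ℝ := fun s => ‖g s‖ ^ 2 * Real.exp (2 * s) with hφ_def
  have hφ' : ∀ δ ∈ Icc (0:ℝ) T, HasDerivAt φ 0 δ := by
    intro δ hδ
    have h1 := (part1 δ hδ).mul ((hasDerivAt_id δ).const_mul 2).exp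
    exact HasDerivAt.congr_deriv h1 (by simp only [id]; ring)
  have hconst : ∀ δ ∈ Icc (0:ℝ) T, φ δ = φ 0 := by
    have hcont : ContinuousOn φ (Icc 0 T) := fun s hs =>
      (hφ' s hs).continuousAt.continuousWithinAt
    exact constant_of_has_deriv_right_zero hcont fun s hs =>
      (hφ' s (Ico_subset_Icc_self hs)).hasDerivWithinAt
  intro δ hδ
  have h0 : φ 0 = ‖g 0‖ ^ 2 := by simp [hφ_def]
  have hφδ : ‖g δ‖ ^ 2 * Real.exp (2 * δ) = ‖g 0‖ ^ 2 := by
    rw [← h0]; exact hconst δ hδ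
  have he : Real.exp (2 * δ) = Real.exp δ * Real.exp δ := by
    rw [← Real.exp_add]; ring_nf
  have he2 : Real.exp (-δ) * Real.exp δ = 1 := by
    rw [← Real.exp_add]; simp
  have hsq : ‖g δ‖ ^ 2 = (‖g 0‖ * Real.exp (-δ)) ^ 2 := by
    calc ‖g δ‖ ^ 2 = ‖g δ‖ ^ 2 * (Real.exp (-δ) * Real.exp δ) ^ 2 := by
          rw [he2]; ring
      _ = (‖g δ‖ ^ 2 * (Real.exp δ * Real.exp δ)) * Real.exp (-δ) ^ 2 := by ring
      _ = ‖g 0‖ ^ 2 * Real.exp (-δ) ^ 2 := by rw [← he, hφδ]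
      _ = (‖g 0‖ * Real.exp (-δ)) ^ 2 := by ring
  nlinarith [norm_nonneg (g δ), norm_nonneg (g 0), Real.exp_pos (-δ),
    mul_nonneg (norm_nonneg (g 0)) (Real.exp_pos (-δ)).le]
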